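/- Let d ≥ 2 and let F ⊆ ℝ^{d-1} be a compact convex set with (d-1)-dimensional Lebesgue measure 1. For every compact convex set K ⊆ ℝ^d with floor F, Vol_d(K) = 1, and K ⊆ F × [0,H] for some H ≥ 0 (i.e., K a sub-prism with floor F), one has Q_K(2) ≤ 1 − 1/d. -/

import Mathlib

open MeasureTheory Set
open scoped ENNReal

noncomputable section

/-- The floor `F ⊆ ℝ^m` embedded into `ℝ^{m+1}` at height `0`, i.e. `F × {0}`. -/
def floorEmb (m : ℕ) (F : Set (Fin m → ℝ)) : Set (Fin (m + 1) → ℝ) :=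
  (fun z => Fin.snoc z (0 : ℝ)) '' F

/-- `K ⊆ ℝ^{m+1}` has floor `F ⊆ ℝ^m`: it lies in the upper half-space and its
intersection with the hyperplane `x_{last} = 0` is `F × {0}`. -/
def HasFloor (m : ℕ) (F : Set (Fin m → ℝ)) (K : Set (Fin (m + 1) → ℝ)) : Prop :=
  K ⊆ {x | 0 ≤ x (Fin.last m)} ∧ K ∩ {x | x (Fin.last m) = 0} = floorEmb m F

/-- `Q_K(2)`: the probability that two independent uniform points `U₁, U₂` of `K`
both lie on the boundary of the convex hull of `{U₁, U₂} ∪ (F × {0})`. -/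
def Qtwo (m : ℕ) (F : Set (Fin m → ℝ)) (K : Set (Fin (m + 1) → ℝ)) : ℝ :=
  (((volume.restrict K).prod (volume.restrict K))
    {p : (Fin (m + 1) → ℝ) × (Fin (m + 1) → ℝ) |
      p.1 ∈ frontier (convexHull ℝ ({p.1, p.2} ∪ floorEmb m F)) ∧
      p.2 ∈ frontier (convexHull ℝ ({p.1, p.2} ∪ floorEmb m F))}).toReal

/-- `L_K(t)`: the `m`-dimensional Lebesgue measure of the horizontal slice of `K`
at height `t`. -/
def layerVol (m : ℕ) (K : Set (Fin (m + 1) → ℝ)) (t : ℝ) : ℝ :=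
  (volume {z : Fin m → ℝ | Fin.snoc z t ∈ K}).toReal

def IsSubPrism (m : ℕ) (F : Set (Fin m → ℝ)) (K : Set (Fin (m + 1) → ℝ)) : Prop :=
  ∃ H : ℝ, 0 ≤ H ∧ K ⊆ {x | Fin.init x ∈ F ∧ x (Fin.last m) ∈ Set.Icc 0 H}

section Aux
variable {m : ℕ} {F : Set (Fin m → ℝ)}

/-- open cone minus apex/base over interior F with apex x -/
def coneO (m : ℕ) (F : Set (Fin m → ℝ)) (x : Fin (m+1) → ℝ) : Set (Fin (m+1) → ℝ) :=
  {y | 0 < y (Fin.last m) ∧ y (Fin.last m) < x (Fin.last m) ∧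
    (x (Fin.last m) - y (Fin.last m))⁻¹ •
      (x (Fin.last m) • Fin.init y - y (Fin.last m) • Fin.init x) ∈ interior F}

variable {m : ℕ} {F : Set (Fin m → ℝ)}

lemma isOpen_coneO_graph :
    IsOpen {p : (Fin (m+1) → ℝ) × (Fin (m+1) → ℝ) | p.2 ∈ coneO m F p.1} := by
  have hA : IsOpen {p : (Fin (m+1) → ℝ) × (Fin (m+1) → ℝ) |
      0 < p.2 (Fin.last m) ∧ p.2 (Fin.last m) < p.1 (Fin.last m)} := by
    apply IsOpen.inter
    · exact isOpen_lt continuous_const ((continuous_apply _).comp continuous_snd)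
    · exact isOpen_lt ((continuous_apply _).comp continuous_snd)
        ((continuous_apply _).comp continuous_fst)
  have hcont : ContinuousOn (fun p : (Fin (m+1) → ℝ) × (Fin (m+1) → ℝ) =>
      (p.1 (Fin.last m) - p.2 (Fin.last m))⁻¹ •
        (p.1 (Fin.last m) • Fin.init p.2 - p.2 (Fin.last m) • Fin.init p.1))
      {p | 0 < p.2 (Fin.last m) ∧ p.2 (Fin.last m) < p.1 (Fin.last m)} := by
    apply ContinuousOn.fun_smul
    · apply ContinuousOn.inv₀
      · fun_prop
      · intro p hp
        exact sub_ne_zero.2 (ne_of_gt hp.2)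
    · apply ContinuousOn.fun_sub
      · apply ContinuousOn.fun_smul (by fun_prop)
        exact (continuous_pi fun i => (continuous_apply _).comp continuous_snd).continuousOn
      · apply ContinuousOn.fun_smul (by fun_prop)
        exact (continuous_pi fun i => (continuous_apply _).comp continuous_fst).continuousOn
  have := hcont.isOpen_inter_preimage hA (isOpen_interior : IsOpen (interior F))
  convert this using 1
  ext p
  simp only [coneO, mem_setOf_eq, mem_inter_iff, mem_preimage]
  tauto

lemma isOpen_coneO (x : Fin (m+1) → ℝ) : IsOpen (coneO m F x) := by
  have : coneO m F x = Prod.mk x ⁻¹' {p : (Fin (m+1) → ℝ) × (Fin (m+1) → ℝ) |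
      p.2 ∈ coneO m F p.1} := rfl
  rw [this]
  exact isOpen_coneO_graph.preimage (Continuous.prodMk_right x)

lemma coneO_subset_hull (x : Fin (m+1) → ℝ) :
    coneO m F x ⊆ convexHull ℝ ({x} ∪ floorEmb m F) := by
  rintro y ⟨h1, h2, h3⟩
  set t := x (Fin.last m) with ht
  set s := y (Fin.last m) with hs
  have ht0 : 0 < t := h1.trans h2
  have hts : t - s ≠ 0 := sub_ne_zero.2 (ne_of_gt h2)
  set z : Fin m → ℝ := (t - s)⁻¹ • (t • Fin.init y - s • Fin.init x) with hz
  have hzF : z ∈ F := interior_subset h3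
  have hyseg : y = (s/t) • x + (1 - s/t) • ((Fin.snoc z (0:ℝ)) : Fin (m+1) → ℝ) := by
    funext i
    induction i using Fin.lastCases with
    | last =>
      simp only [Pi.add_apply, Pi.smul_apply, Fin.snoc_last, smul_eq_mul, mul_zero, add_zero]
      field_simp
      rw [← hs, ← ht, mul_comm]
    | cast i =>
      simp only [Pi.add_apply, Pi.smul_apply, Fin.snoc_castSucc, smul_eq_mul, hz,
        Pi.sub_apply]
      have : Fin.init y i = y i.castSucc := rfl
      rw [← this]
      show Fin.init y i = s / t * x i.castSucc + (1 - s/t) * ((t-s)⁻¹ * (t * Fin.init y i - s * Fin.init x i))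
      have : Fin.init x i = x i.castSucc := rfl
      rw [← this]
      field_simp
      ring
  have hseg : y ∈ segment ℝ x ((Fin.snoc z (0:ℝ)) : Fin (m+1) → ℝ) := by
    refine ⟨s/t, 1 - s/t, by positivity, ?_, by ring, hyseg.symm⟩
    have : s / t ≤ 1 := by
      rw [div_le_one ht0]; exact le_of_lt h2
    linarith
  refine segment_subset_convexHull ?_ ?_ hseg
  · exact Or.inl rfl
  · exact Or.inr ⟨z, hzF, rfl⟩

lemma snoc_eq_symm (t : ℝ) (z : Fin m → ℝ) :
    (MeasurableEquiv.piFinSuccAbove (fun _ => ℝ) (Fin.last m)).symm (t, z) = Fin.snoc z t := by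
  simp [MeasurableEquiv.piFinSuccAbove, Fin.snocEquiv, Fin.insertNth_last']

lemma vol_slice (S : Set (Fin (m+1) → ℝ)) (hS : MeasurableSet S) :
    volume S = ∫⁻ t : ℝ, volume {z : Fin m → ℝ | Fin.snoc z t ∈ S} := by
  have hp := (volume_preserving_piFinSuccAbove (fun _ : Fin (m+1) => ℝ) (Fin.last m)).symm
  rw [← hp.measure_preimage hS.nullMeasurableSet]
  have hpre : (⇑(MeasurableEquiv.piFinSuccAbove (fun _ => ℝ) (Fin.last m)).symm) ⁻¹' S
      = {p : ℝ × (Fin m → ℝ) | Fin.snoc p.2 p.1 ∈ S} := by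
    ext ⟨t, z⟩
    rw [mem_preimage, snoc_eq_symm]
    rfl
  rw [hpre, show (volume : Measure (ℝ × (Fin m → ℝ))) = Measure.prod volume volume from rfl,
    Measure.prod_apply (by rw [← hpre]; exact hp.measurable hS)]
  rfl

/-- the slice of the open cone at height `s ∈ (0,t)` -/
lemma coneO_slice (x : Fin (m+1) → ℝ) (s : ℝ) (hs : 0 < s) (hst : s < x (Fin.last m)) :
    {z : Fin m → ℝ | Fin.snoc z s ∈ coneO m F x}
      = ((x (Fin.last m)/(x (Fin.last m) - s)) • ·) ⁻¹'
        ((· + (x (Fin.last m) - s)⁻¹ • (- s • Fin.init x)) ⁻¹' (interior F)) := by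
  set t := x (Fin.last m)
  have hts : t - s ≠ 0 := sub_ne_zero.2 (ne_of_gt hst)
  have hfun : ∀ z : Fin m → ℝ,
      (t - s)⁻¹ • (t • z - s • Fin.init x)
        = (t/(t - s)) • z + (t - s)⁻¹ • (- s • Fin.init x) := by
    intro z
    funext i
    simp only [Pi.add_apply, Pi.smul_apply, Pi.sub_apply, Pi.neg_apply, smul_eq_mul]
    field_simp
    ring
  ext z
  simp only [mem_setOf_eq, coneO, mem_preimage, Fin.snoc_last, Fin.init_snoc]
  constructor
  · rintro ⟨-, -, h⟩
    rw [← hfun]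
    exact h
  · intro h
    refine ⟨hs, hst, ?_⟩
    rw [hfun]
    exact h

lemma vol_interior_eq (hFconv : Convex ℝ F) (hFvol : volume F = 1) :
    volume (interior F) = 1 := by
  have h0 : volume (frontier F) = 0 := hFconv.addHaar_frontier volume
  rw [← self_diff_frontier, measure_diff_null h0, hFvol]

lemma vol_coneO (hFconv : Convex ℝ F) (hFvol : volume F = 1) (x : Fin (m+1) → ℝ) :
    ENNReal.ofReal (x (Fin.last m) / ((m:ℝ) + 1)) ≤ volume (coneO m F x) := by
  set t := x (Fin.last m) with htdef
  rcases le_or_gt t 0 with ht | ht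
  · have : t / ((m:ℝ)+1) ≤ 0 := div_nonpos_iff.2 (Or.inr ⟨ht, by positivity⟩)
    simp [ENNReal.ofReal_eq_zero.2 this]
  · rw [vol_slice _ (isOpen_coneO x).measurableSet]
    have hU : volume (interior F) = 1 := vol_interior_eq hFconv hFvol
    calc ENNReal.ofReal (t / ((m:ℝ) + 1))
        = ∫⁻ s in Ioo 0 t, ENNReal.ofReal (((t - s)/t)^m) := by
          rw [← MeasureTheory.ofReal_integral_eq_lintegral_ofReal]
          · congr 1
            rw [← MeasureTheory.integral_Ioc_eq_integral_Ioo,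
              ← intervalIntegral.integral_of_le (le_of_lt ht)]
            have : ∀ s, ((t - s)/t)^m = (t - s)^m / t^m := fun s => div_pow _ _ _
            simp only [this]
            rw [intervalIntegral.integral_div]
            rw [intervalIntegral.integral_comp_sub_left (fun u => u ^ m) t]
            simp only [sub_zero, sub_self]
            rw [integral_pow]
            rw [zero_pow (by omega), sub_zero]
            rw [eq_div_iff (by positivity)]
            field_simp
            ring
          · exact (((by fun_prop : Continuous fun s => ((t - s)/t)^m).continuousOn).integrableOn_compact
              isCompact_Icc).mono_set Ioo_subset_Icc_self
          · filter_upwards [ae_restrict_mem measurableSet_Ioo] with s hs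
            have : 0 < t - s := sub_pos.2 hs.2
            positivity
        _ ≤ ∫⁻ s in Ioo 0 t, volume {z : Fin m → ℝ | Fin.snoc z s ∈ coneO m F x} := by
          apply setLIntegral_mono' measurableSet_Ioo
          intro s hs
          rw [coneO_slice x s hs.1 hs.2]
          set a := t / (t - s) with ha
          have hts : t - s ≠ 0 := sub_ne_zero.2 (ne_of_gt hs.2)
          have ha0 : a ≠ 0 := div_ne_zero (ne_of_gt ht) hts
          rw [Measure.addHaar_preimage_smul volume ha0, measure_preimage_add_right, hU,
            mul_one, Module.finrank_fin_fun]
          have hts' : 0 < t - s := sub_pos.2 hs.2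
          rw [ha, ← inv_pow, inv_div, abs_of_nonneg (by positivity)]
        _ ≤ ∫⁻ s : ℝ, volume {z : Fin m → ℝ | Fin.snoc z s ∈ coneO m F x} :=
            setLIntegral_le_lintegral _ _

variable {K : Set (Fin (m + 1) → ℝ)}

lemma sliceK_subset_F (hKsub : ∃ H : ℝ, 0 ≤ H ∧ K ⊆ {x | Fin.init x ∈ F ∧ x (Fin.last m) ∈ Set.Icc 0 H})
    (t : ℝ) : {z : Fin m → ℝ | Fin.snoc z t ∈ K} ⊆ F := by
  obtain ⟨H, -, hsub⟩ := hKsub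
  intro z hz
  have := (hsub hz).1
  rwa [Fin.init_snoc] at this

lemma sliceK_empty_neg (hKfl : K ⊆ {x | 0 ≤ x (Fin.last m)}) {t : ℝ} (ht : t < 0) :
    {z : Fin m → ℝ | Fin.snoc z t ∈ K} = ∅ := by
  ext z
  simp only [mem_setOf_eq, mem_empty_iff_false, iff_false]
  intro hz
  have := hKfl hz
  rw [mem_setOf_eq, Fin.snoc_last] at this
  linarith

/-- the expected height is at least 1/2 -/
lemma height_integral (hFvol : volume F = 1) (hKmeas : MeasurableSet K)
    (hKfl : K ⊆ {x | 0 ≤ x (Fin.last m)})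
    (hKsub : ∃ H : ℝ, 0 ≤ H ∧ K ⊆ {x | Fin.init x ∈ F ∧ x (Fin.last m) ∈ Set.Icc 0 H})
    (hKvol : volume K = 1) :
    ENNReal.ofReal (1/2) ≤ ∫⁻ x in K, ENNReal.ofReal (x (Fin.last m)) := by
  classical
  set L : ℝ → ℝ≥0∞ := fun t => volume {z : Fin m → ℝ | Fin.snoc z t ∈ K} with hL
  -- rewrite the set integral as ∫ t, ofReal t * L t
  have hp := (volume_preserving_piFinSuccAbove (fun _ : Fin (m+1) => ℝ) (Fin.last m)).symm
  have hemb : MeasurableEmbedding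
      (⇑(MeasurableEquiv.piFinSuccAbove (fun _ : Fin (m+1) => ℝ) (Fin.last m)).symm) :=
    (MeasurableEquiv.piFinSuccAbove (fun _ : Fin (m+1) => ℝ) (Fin.last m)).symm.measurableEmbedding
  have hpre : (⇑(MeasurableEquiv.piFinSuccAbove (fun _ : Fin (m+1) => ℝ) (Fin.last m)).symm) ⁻¹' K
      = {p : ℝ × (Fin m → ℝ) | Fin.snoc p.2 p.1 ∈ K} := by
    ext ⟨t, z⟩
    rw [mem_preimage, snoc_eq_symm]
    rfl
  have hT : MeasurableSet {p : ℝ × (Fin m → ℝ) | Fin.snoc p.2 p.1 ∈ K} := by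
    rw [← hpre]; exact hemb.measurable hKmeas
  have key : (∫⁻ x in K, ENNReal.ofReal (x (Fin.last m))) = ∫⁻ t : ℝ, ENNReal.ofReal t * L t := by
    rw [← hp.setLIntegral_comp_preimage_emb hemb (fun x => ENNReal.ofReal (x (Fin.last m))) K]
    have : ∀ p : ℝ × (Fin m → ℝ),
        ENNReal.ofReal (((MeasurableEquiv.piFinSuccAbove (fun _ : Fin (m+1) => ℝ)
          (Fin.last m)).symm p) (Fin.last m)) = ENNReal.ofReal p.1 := by
      rintro ⟨t, z⟩
      rw [snoc_eq_symm, Fin.snoc_last]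
    rw [setLIntegral_congr_fun (hemb.measurable hKmeas) (fun p _ => this p)]
    rw [hpre]
    rw [show (volume : Measure (ℝ × (Fin m → ℝ))) = Measure.prod volume volume from rfl]
    rw [← lintegral_indicator hT]
    rw [lintegral_prod _ ((measurable_fst.ennreal_ofReal.indicator hT).aemeasurable)]
    congr 1
    funext t
    have : ∀ z : Fin m → ℝ, ({p : ℝ × (Fin m → ℝ) | Fin.snoc p.2 p.1 ∈ K}.indicator
        (fun p => ENNReal.ofReal p.1)) (t, z)
        = ({z : Fin m → ℝ | Fin.snoc z t ∈ K}.indicator (fun _ => ENNReal.ofReal t)) z := by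
      intro z
      by_cases h : Fin.snoc z t ∈ K <;> simp [indicator, h]
    simp only [this]
    rw [lintegral_indicator (by exact measurable_prodMk_left hT)]
    rw [setLIntegral_const]
  rw [key]
  -- L properties
  have hLone : ∀ t, L t ≤ 1 := by
    intro t
    rw [← hFvol]
    exact measure_mono (sliceK_subset_F hKsub t)
  have hLint : (∫⁻ t : ℝ, L t) = 1 := by rw [← vol_slice K hKmeas, hKvol]
  have hptwise : ∀ t : ℝ, L t ≤ ENNReal.ofReal t * L t
      + (Icc (0:ℝ) 1).indicator (fun t => ENNReal.ofReal (1 - t)) t := by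
    intro t
    rcases lt_or_ge t 0 with ht | ht
    · rw [hL]
      simp [sliceK_empty_neg hKfl ht]
    rcases le_or_gt t 1 with ht1 | ht1
    · have : (1 : ℝ≥0∞) = ENNReal.ofReal t + ENNReal.ofReal (1 - t) := by
        rw [← ENNReal.ofReal_add ht (by linarith), add_sub_cancel, ENNReal.ofReal_one]
      calc L t = (ENNReal.ofReal t + ENNReal.ofReal (1 - t)) * L t := by rw [← this, one_mul]
        _ = ENNReal.ofReal t * L t + ENNReal.ofReal (1 - t) * L t := by ring
        _ ≤ ENNReal.ofReal t * L t + (Icc (0:ℝ) 1).indicator (fun t => ENNReal.ofReal (1 - t)) t := by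
            gcongr
            rw [indicator_of_mem (mem_Icc.2 ⟨ht, ht1⟩)]
            calc ENNReal.ofReal (1 - t) * L t ≤ ENNReal.ofReal (1 - t) * 1 := by gcongr; exact hLone t
              _ = ENNReal.ofReal (1 - t) := mul_one _
    · calc L t = 1 * L t := (one_mul _).symm
        _ ≤ ENNReal.ofReal t * L t := by
            gcongr
            rw [← ENNReal.ofReal_one]
            exact ENNReal.ofReal_le_ofReal (le_of_lt ht1)
        _ ≤ _ := le_self_add
  have hind : (∫⁻ t : ℝ, (Icc (0:ℝ) 1).indicator (fun t => ENNReal.ofReal (1 - t)) t)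
      = ENNReal.ofReal (1/2) := by
    rw [lintegral_indicator measurableSet_Icc]
    rw [← MeasureTheory.ofReal_integral_eq_lintegral_ofReal]
    · congr 1
      rw [MeasureTheory.integral_Icc_eq_integral_Ioc, ← intervalIntegral.integral_of_le zero_le_one]
      rw [intervalIntegral.integral_comp_sub_left (fun u => u) 1]
      simp [integral_id]
    · exact (((by fun_prop : Continuous fun s : ℝ => 1 - s).continuousOn).integrableOn_compact
        isCompact_Icc)
    · filter_upwards [ae_restrict_mem measurableSet_Icc] with s hs
      simp only [Pi.zero_apply]
      linarith [hs.2]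
  have hsum : (1 : ℝ≥0∞) ≤ (∫⁻ t : ℝ, ENNReal.ofReal t * L t) + ENNReal.ofReal (1/2) := by
    calc (1:ℝ≥0∞) = ∫⁻ t : ℝ, L t := hLint.symm
      _ ≤ ∫⁻ t : ℝ, (ENNReal.ofReal t * L t
          + (Icc (0:ℝ) 1).indicator (fun t => ENNReal.ofReal (1 - t)) t) :=
          lintegral_mono hptwise
      _ = (∫⁻ t : ℝ, ENNReal.ofReal t * L t) + ENNReal.ofReal (1/2) := by
          rw [lintegral_add_right _ (((by fun_prop : Measurable fun t : ℝ => ENNReal.ofReal (1 - t)).indicator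
            measurableSet_Icc)), hind]
  have : (1:ℝ≥0∞) - ENNReal.ofReal (1/2) ≤ ∫⁻ t : ℝ, ENNReal.ofReal t * L t :=
    tsub_le_iff_right.2 hsum
  calc ENNReal.ofReal (1/2) = 1 - ENNReal.ofReal (1/2) := by
        rw [← ENNReal.ofReal_one, ← ENNReal.ofReal_sub _ (by norm_num)]
        norm_num
    _ ≤ _ := this

theorem stmt2' (m : ℕ) (hm : 1 ≤ m) (F : Set (Fin m → ℝ))
    (hFcomp : IsCompact F) (hFconv : Convex ℝ F) (hFvol : volume F = 1)
    (K : Set (Fin (m + 1) → ℝ)) (hKcomp : IsCompact K) (hKconv : Convex ℝ K)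
    (hKfl : K ⊆ {x | 0 ≤ x (Fin.last m)})
    (hKcap : K ∩ {x | x (Fin.last m) = 0} = floorEmb m F) (hKvol : volume K = 1)
    (hKsub : ∃ H : ℝ, 0 ≤ H ∧ K ⊆ {x | Fin.init x ∈ F ∧ x (Fin.last m) ∈ Set.Icc 0 H}) :
    ((((volume.restrict K).prod (volume.restrict K))
    {p : (Fin (m + 1) → ℝ) × (Fin (m + 1) → ℝ) |
      p.1 ∈ frontier (convexHull ℝ ({p.1, p.2} ∪ floorEmb m F)) ∧
      p.2 ∈ frontier (convexHull ℝ ({p.1, p.2} ∪ floorEmb m F))}).toReal)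
      ≤ 1 - 1 / ((m : ℝ) + 1) := by
  classical
  have hKmeas : MeasurableSet K := hKcomp.isClosed.measurableSet
  set ν := volume.restrict K with hν
  set c : ℝ≥0∞ := ENNReal.ofReal (((m:ℝ)+1)⁻¹) with hc
  set O2 := {p : (Fin (m+1) → ℝ) × (Fin (m+1) → ℝ) | p.2 ∈ coneO m F p.1} with hO2def
  have hO2 : MeasurableSet O2 := isOpen_coneO_graph.measurableSet
  set O1 := Prod.swap ⁻¹' O2 with hO1def
  have hO1 : MeasurableSet O1 := hO2.preimage measurable_swap
  have hFembK : floorEmb m F ⊆ K := by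
    rw [← hKcap]; exact inter_subset_left
  have hconeK : ∀ x ∈ K, coneO m F x ⊆ K := fun x hx =>
    (coneO_subset_hull x).trans (convexHull_min
      (union_subset (singleton_subset_iff.2 hx) hFembK) hKconv)
  have hν_cone : ∀ x ∈ K, ENNReal.ofReal (x (Fin.last m)) * c ≤ ν (coneO m F x) := by
    intro x hx
    rw [hν, Measure.restrict_apply (isOpen_coneO x).measurableSet,
      inter_eq_self_of_subset_left (hconeK x hx)]
    refine le_trans ?_ (vol_coneO hFconv hFvol x)
    rw [hc, ← ENNReal.ofReal_mul (hKfl hx : (0:ℝ) ≤ _), ← div_eq_mul_inv]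
  have hPO2 : ENNReal.ofReal (1/2) * c ≤ (ν.prod ν) O2 := by
    rw [Measure.prod_apply hO2]
    have hpre : ∀ x, (Prod.mk x ⁻¹' O2) = coneO m F x := fun _ => rfl
    simp_rw [hpre]
    calc ENNReal.ofReal (1/2) * c
        ≤ (∫⁻ x in K, ENNReal.ofReal (x (Fin.last m))) * c := by
          gcongr
          exact height_integral hFvol hKmeas hKfl hKsub hKvol
      _ = ∫⁻ x in K, ENNReal.ofReal (x (Fin.last m)) * c :=
          (lintegral_mul_const c ((continuous_apply (Fin.last m)).measurable.ennreal_ofReal)).symm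
      _ ≤ ∫⁻ x in K, ν (coneO m F x) := setLIntegral_mono' hKmeas hν_cone
      _ = ∫⁻ x, ν (coneO m F x) ∂ν := rfl
  have hswap : (ν.prod ν) O1 = (ν.prod ν) O2 := by
    rw [hO1def, ← Measure.map_apply measurable_swap hO2, Measure.prod_swap]
  have hdisj : Disjoint O1 O2 := by
    rw [disjoint_left]
    intro p h1 h2
    have ha : p.1 ∈ coneO m F p.2 := h1
    have hb : p.2 ∈ coneO m F p.1 := h2
    have := ha.2.1
    have := hb.2.1
    linarith
  have hPunion : c ≤ (ν.prod ν) (O1 ∪ O2) := by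
    rw [measure_union hdisj hO2, hswap]
    have : c = (ENNReal.ofReal (1/2) * c) + (ENNReal.ofReal (1/2) * c) := by
      rw [← add_mul, ← ENNReal.ofReal_add (by norm_num) (by norm_num)]
      norm_num
    rw [this]
    exact add_le_add hPO2 hPO2
  have hQsub : {p : (Fin (m + 1) → ℝ) × (Fin (m + 1) → ℝ) |
      p.1 ∈ frontier (convexHull ℝ ({p.1, p.2} ∪ floorEmb m F)) ∧
      p.2 ∈ frontier (convexHull ℝ ({p.1, p.2} ∪ floorEmb m F))} ⊆ (O1 ∪ O2)ᶜ := by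
    intro p hp
    simp only [mem_compl_iff, mem_union]
    rintro (h1 | h2)
    · have ha : p.1 ∈ coneO m F p.2 := h1
      have hsub : coneO m F p.2 ⊆ convexHull ℝ ({p.1, p.2} ∪ floorEmb m F) := by
        refine (coneO_subset_hull p.2).trans (convexHull_mono
          (union_subset_union_left _ ?_))
        intro a haa
        rw [mem_singleton_iff] at haa
        subst haa
        exact mem_insert_of_mem _ rfl
      have hint : p.1 ∈ interior (convexHull ℝ ({p.1, p.2} ∪ floorEmb m F)) :=
        interior_maximal hsub (isOpen_coneO p.2) ha
      exact hp.1.2 hint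
    · have hb : p.2 ∈ coneO m F p.1 := h2
      have hsub : coneO m F p.1 ⊆ convexHull ℝ ({p.1, p.2} ∪ floorEmb m F) := by
        refine (coneO_subset_hull p.1).trans (convexHull_mono
          (union_subset_union_left _ ?_))
        intro a haa
        rw [mem_singleton_iff] at haa
        subst haa
        exact mem_insert _ _
      have hint : p.2 ∈ interior (convexHull ℝ ({p.1, p.2} ∪ floorEmb m F)) :=
        interior_maximal hsub (isOpen_coneO p.1) hb
      exact hp.2.2 hint
  have hPuniv : (ν.prod ν) univ = 1 := by
    rw [← univ_prod_univ, Measure.prod_prod, hν, Measure.restrict_apply_univ, hKvol, mul_one]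
  have hQle : (ν.prod ν) {p : (Fin (m + 1) → ℝ) × (Fin (m + 1) → ℝ) |
      p.1 ∈ frontier (convexHull ℝ ({p.1, p.2} ∪ floorEmb m F)) ∧
      p.2 ∈ frontier (convexHull ℝ ({p.1, p.2} ∪ floorEmb m F))} ≤ 1 - c := by
    calc _ ≤ (ν.prod ν) ((O1 ∪ O2)ᶜ) := measure_mono hQsub
      _ = (ν.prod ν) univ - (ν.prod ν) (O1 ∪ O2) :=
          measure_compl (hO1.union hO2)
            (ne_top_of_le_ne_top (by rw [hPuniv]; exact ENNReal.one_ne_top)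
              (measure_mono (subset_univ _)))
      _ ≤ 1 - c := by
          rw [hPuniv]
          exact tsub_le_tsub_left hPunion 1
  have hc1 : c ≤ 1 := by
    rw [hc, ← ENNReal.ofReal_one]
    apply ENNReal.ofReal_le_ofReal
    rw [inv_le_one_iff₀]
    right
    push_cast
    linarith [Nat.cast_nonneg (α := ℝ) m]
  have hfin : (1 : ℝ≥0∞) - c ≠ ⊤ := by
    exact ne_top_of_le_ne_top ENNReal.one_ne_top tsub_le_self
  calc _ ≤ ((1 : ℝ≥0∞) - c).toReal := ENNReal.toReal_mono hfin hQle
    _ = 1 - 1 / ((m:ℝ) + 1) := by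
        rw [ENNReal.toReal_sub_of_le hc1 ENNReal.one_ne_top]
        rw [hc, ENNReal.toReal_ofReal (by positivity), ENNReal.toReal_one, one_div]

end Aux

/-- For a sub-prism `K` with floor `F` and volume `1`, `Q_K(2) ≤ 1 - 1/d`. -/
theorem stmt2 (m : ℕ) (hm : 1 ≤ m) (F : Set (Fin m → ℝ))
    (hFcomp : IsCompact F) (hFconv : Convex ℝ F) (hFvol : volume F = 1)
    (K : Set (Fin (m + 1) → ℝ)) (hKcomp : IsCompact K) (hKconv : Convex ℝ K)
    (hKfloor : HasFloor m F K) (hKvol : volume K = 1)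
    (hKsub : IsSubPrism m F K) :
    Qtwo m F K ≤ 1 - 1 / ((m : ℝ) + 1) := by
  obtain ⟨hKfl, hKcap⟩ := hKfloor
  exact stmt2' m hm F hFcomp hFconv hFvol K hKcomp hKconv hKfl hKcap hKvol hKsub

end
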